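/- Let S, S' ⊆ [2m] be subsets with |S| = 2k, |S'| = 2k', and |S ∩ S'| = 2a. For a uniformly random permutation p of [2m], the probability that the image p(S) and the image p(S') are each simultaneously unions of the pairs {2i−1, 2i} equals multinomial(m; a, k−a, k'−a, m−k−k'+a) / multinomial(2m; 2a, 2(k−a), 2(k'−a), 2(m−k−k'+a)). -/

import Mathlib

/-- The pair {2i, 2i+1} (0-indexed version of {2i−1, 2i}) inside Fin (2m). -/
def pairSet (m : ℕ) (i : Fin m) : Finset (Fin (2 * m)) :=
  {⟨2 * i.val, by have := i.isLt; omega⟩, ⟨2 * i.val + 1, by have := i.isLt; omega⟩}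

/-- T ⊆ [2m] is a union of pairs if it equals ∪_{i∈I} {2i, 2i+1} for some I ⊆ [m]. -/
def IsUnionOfPairs (m : ℕ) (T : Finset (Fin (2 * m))) : Prop :=
  ∃ I : Finset (Fin m), T = I.biUnion (pairSet m)

open Finset

section PermCount

variable {α β : Type*} [Fintype α] [DecidableEq α] [DecidableEq β] [Fintype β]
variable (c h : α → β)

/-- permutations compatible with colorings `c`, `h` correspond to families of fiber equivs -/
def permFiberEquiv :
    {q : Equiv.Perm α // ∀ x, c (q x) = h x} ≃ ∀ k, ({x // h x = k} ≃ {x // c x = k}) where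
  toFun q k :=
    { toFun := fun x => ⟨q.1 x.1, by rw [q.2]; exact x.2⟩
      invFun := fun y => ⟨q.1.symm y.1, by
        have := q.2 (q.1.symm y.1); rw [Equiv.apply_symm_apply] at this; rw [← this]; exact y.2⟩
      left_inv := fun x => by ext; simp
      right_inv := fun y => by ext; simp }
  invFun e :=
    ⟨{ toFun := fun x => (e (h x) ⟨x, rfl⟩).1
       invFun := fun y => ((e (c y)).symm ⟨y, rfl⟩).1
       left_inv := by
         intro x
         have L : ∀ (k : β) (y : α) (hy : c y = k),
             ((e (c y)).symm ⟨y, rfl⟩).1 = ((e k).symm ⟨y, hy⟩).1 := by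
           intro k y hy; subst hy; rfl
         dsimp only
         rw [L (h x) _ (e (h x) ⟨x, rfl⟩).2]
         simp
       right_inv := by
         intro y
         have L : ∀ (k : β) (x : α) (hx : h x = k),
             (e (h x) ⟨x, rfl⟩).1 = ((e k) ⟨x, hx⟩).1 := by
           intro k x hx; subst hx; rfl
         dsimp only
         rw [L (c y) _ ((e (c y)).symm ⟨y, rfl⟩).2]
         simp },
     fun x => (e (h x) ⟨x, rfl⟩).2⟩
  left_inv q := by
    apply Subtype.ext; apply Equiv.ext; intro x; rfl
  right_inv e := by
    funext k; apply Equiv.ext; rintro ⟨x, hx⟩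
    apply Subtype.ext
    show (e (h x) ⟨x, rfl⟩).1 = _
    have L : ∀ (k : β) (x : α) (hx : h x = k),
        (e (h x) ⟨x, rfl⟩).1 = ((e k) ⟨x, hx⟩).1 := by
      intro k x hx; subst hx; rfl
    exact L k x hx

theorem card_perm_compat_of_counts
    (hcnt : ∀ k, (univ.filter fun x => h x = k).card = (univ.filter fun x => c x = k).card) :
    (univ.filter fun q : Equiv.Perm α => ∀ x, c (q x) = h x).card
      = ∏ k, Nat.factorial ((univ.filter fun x => c x = k).card) := by
  have key : (univ.filter fun q : Equiv.Perm α => ∀ x, c (q x) = h x).card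
      = Fintype.card {q : Equiv.Perm α // ∀ x, c (q x) = h x} := by
    rw [Fintype.card_subtype]
  rw [key, Fintype.card_congr (permFiberEquiv c h), Fintype.card_pi]
  refine Finset.prod_congr rfl fun k _ => ?_
  have hc : Fintype.card {x // c x = k} = (univ.filter fun x => c x = k).card :=
    Fintype.card_subtype _
  have hh : Fintype.card {x // h x = k} = (univ.filter fun x => h x = k).card :=
    Fintype.card_subtype _
  have heq : Fintype.card {x // h x = k} = Fintype.card {x // c x = k} := by
    rw [hc, hh, hcnt]
  rw [Fintype.card_equiv (Fintype.equivOfCardEq heq), hh, hcnt]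

theorem card_perm_compat_of_not_counts
    (hcnt : ¬ ∀ k, (univ.filter fun x => h x = k).card = (univ.filter fun x => c x = k).card) :
    (univ.filter fun q : Equiv.Perm α => ∀ x, c (q x) = h x).card = 0 := by
  rw [Finset.card_eq_zero, Finset.filter_eq_empty_iff]
  intro q _ hq
  apply hcnt
  intro k
  apply Finset.card_bij (fun x _ => q x)
  · intro x hx; simp only [mem_filter, mem_univ, true_and] at hx ⊢; rw [hq, hx]
  · intro x _ y _ hxy; exact q.injective hxy
  · intro y hy
    simp only [mem_filter, mem_univ, true_and] at hy ⊢
    exact ⟨q.symm y, by rw [← hq (q.symm y), Equiv.apply_symm_apply, hy], by simp⟩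

end PermCount

section Pairs

def pairIdx (m : ℕ) (z : Fin (2 * m)) : Fin m := ⟨z.1 / 2, by have := z.isLt; omega⟩

theorem mem_pairSet_iff {m : ℕ} {i : Fin m} {z : Fin (2 * m)} :
    z ∈ pairSet m i ↔ pairIdx m z = i := by
  simp only [pairSet, mem_insert, mem_singleton, Fin.ext_iff, pairIdx]
  omega

theorem isUnionOfPairs_iff {m : ℕ} {T : Finset (Fin (2 * m))} :
    IsUnionOfPairs m T ↔ ∀ z w : Fin (2 * m), pairIdx m z = pairIdx m w → (z ∈ T ↔ w ∈ T) := by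
  constructor
  · rintro ⟨I, rfl⟩ z w hzw
    simp only [mem_biUnion, mem_pairSet_iff]
    constructor
    · rintro ⟨i, hi, rfl⟩; exact ⟨_, hzw ▸ hi, hzw.symm⟩
    · rintro ⟨i, hi, rfl⟩; exact ⟨_, hzw ▸ hi, hzw⟩
  · intro H
    refine ⟨T.image (pairIdx m), ?_⟩
    ext z
    simp only [mem_biUnion, mem_image, mem_pairSet_iff]
    constructor
    · intro hz; exact ⟨_, ⟨z, hz, rfl⟩, rfl⟩
    · rintro ⟨i, ⟨w, hw, rfl⟩, hz⟩; exact (H z w hz).mpr hw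

theorem card_pairSet {m : ℕ} (i : Fin m) : (pairSet m i).card = 2 := by
  rw [pairSet, card_insert_of_notMem (by simp [Fin.ext_iff]), card_singleton]

def pairEmb (m : ℕ) (i : Fin m) : Fin (2 * m) := ⟨2 * i.1, by have := i.isLt; omega⟩

theorem pairIdx_pairEmb {m : ℕ} (i : Fin m) : pairIdx m (pairEmb m i) = i := by
  simp only [pairIdx, pairEmb, Fin.ext_iff]; omega

theorem card_filter_pairIdx {m : ℕ} {K : Type*} [DecidableEq K] (g : Fin m → K) (k : K) :
    ((univ : Finset (Fin (2 * m))).filter fun z => g (pairIdx m z) = k).card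
      = 2 * ((univ : Finset (Fin m)).filter fun i => g i = k).card := by
  have key : ((univ : Finset (Fin (2 * m))).filter fun z => g (pairIdx m z) = k)
      = ((univ : Finset (Fin m)).filter fun i => g i = k).biUnion (pairSet m) := by
    ext z
    simp only [mem_filter, mem_univ, true_and, mem_biUnion, mem_pairSet_iff]
    constructor
    · intro hz; exact ⟨pairIdx m z, hz, rfl⟩
    · rintro ⟨i, hi, rfl⟩; exact hi
  rw [key, Finset.card_biUnion, Finset.sum_congr rfl fun i _ => card_pairSet i,
    Finset.sum_const, smul_eq_mul, mul_comm]
  intro i _ j _ hij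
  simp only [Finset.disjoint_left, mem_pairSet_iff]
  rintro z rfl h2
  exact hij (h2.symm ▸ rfl)

theorem card_filter_interval (m l n : ℕ) (h : l + n ≤ m) :
    ((univ : Finset (Fin m)).filter fun i => l ≤ i.1 ∧ i.1 < l + n).card = n := by
  have H := Finset.card_bij'
    (s := (univ : Finset (Fin m)).filter fun i => l ≤ i.1 ∧ i.1 < l + n)
    (t := (univ : Finset (Fin n)))
    (i := fun i hi => (⟨i.1 - l, by simp only [mem_filter] at hi; omega⟩ : Fin n))
    (j := fun j _ => (⟨l + j.1, by have := j.isLt; omega⟩ : Fin m))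
    (hi := fun i hi => mem_univ _)
    (hj := fun j hj => by simp only [mem_filter, mem_univ, true_and]; have := j.isLt; omega)
    (left_inv := fun i hi => by
      simp only [mem_filter, mem_univ, true_and] at hi; ext; simp; omega)
    (right_inv := fun j hj => by ext; simp)
  rw [H, Finset.card_univ, Fintype.card_fin]

/-- a reference coloring of `Fin m` with prescribed fiber sizes -/
def refColoring (a b c : ℕ) (m : ℕ) : Fin m → Bool × Bool := fun i =>
  if i.1 < a then (true, true)
  else if i.1 < a + b then (true, false)
  else if i.1 < a + b + c then (false, true)
  else (false, false)

/-- prescribed fiber sizes -/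
def szFn (a b c d : ℕ) : Bool × Bool → ℕ := fun k =>
  if k.1 then (if k.2 then a else b) else (if k.2 then c else d)

theorem refColoring_counts {m a b c d : ℕ} (habcd : a + b + c + d = m) (k : Bool × Bool) :
    ((univ : Finset (Fin m)).filter fun i => refColoring a b c m i = k).card = szFn a b c d k := by
  obtain ⟨k1, k2⟩ := k
  have e1 : ∀ i : Fin m, (refColoring a b c m i = ((true : Bool), (true : Bool))) ↔
      (0 ≤ i.1 ∧ i.1 < 0 + a) := by
    intro i; unfold refColoring; split_ifs <;> simp <;> omega
  have e2 : ∀ i : Fin m, (refColoring a b c m i = ((true : Bool), (false : Bool))) ↔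
      (a ≤ i.1 ∧ i.1 < a + b) := by
    intro i; unfold refColoring; split_ifs <;> simp <;> omega
  have e3 : ∀ i : Fin m, (refColoring a b c m i = ((false : Bool), (true : Bool))) ↔
      (a + b ≤ i.1 ∧ i.1 < (a + b) + c) := by
    intro i; unfold refColoring; split_ifs <;> simp <;> omega
  have e4 : ∀ i : Fin m, (refColoring a b c m i = ((false : Bool), (false : Bool))) ↔
      (a + b + c ≤ i.1 ∧ i.1 < (a + b + c) + d) := by
    intro i; unfold refColoring; split_ifs <;> simp_all <;> omega
  cases k1 <;> cases k2 <;> simp only [szFn]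
  · rw [Finset.filter_congr (fun i _ => e4 i)]
    exact (card_filter_interval m (a+b+c) d (by omega)).trans (by norm_num)
  · rw [Finset.filter_congr (fun i _ => e3 i)]
    exact (card_filter_interval m (a+b) c (by omega)).trans (by norm_num)
  · rw [Finset.filter_congr (fun i _ => e2 i)]
    exact (card_filter_interval m a b (by omega)).trans (by norm_num)
  · rw [Finset.filter_congr (fun i _ => e1 i)]
    exact (card_filter_interval m 0 a (by omega)).trans (by norm_num)

end Pairs

theorem filter_ext {α : Type*} (s : Finset α) (p q : α → Prop) (h1 : DecidablePred p)
    (h2 : DecidablePred q) (H : ∀ x, p x ↔ q x) :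
    @Finset.filter α p h1 s = @Finset.filter α q h2 s := by
  ext x
  rw [Finset.mem_filter, Finset.mem_filter]
  exact and_congr_right fun _ => H x

def colFn {n : ℕ} (S S' : Finset (Fin n)) : Fin n → Bool × Bool :=
  fun x => (decide (x ∈ S), decide (x ∈ S'))

open Classical Nat in
theorem main_count (m a b c d : ℕ) (S S' : Finset (Fin (2 * m)))
    (hab : (S ∩ S').card = 2 * a) (hb : (S \ S').card = 2 * b) (hc : (S' \ S).card = 2 * c)
    (hd : ((S ∪ S')ᶜ).card = 2 * d) :
    ∃ G : ℕ,
      (Finset.univ.filter fun p : Equiv.Perm (Fin (2 * m)) =>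
        IsUnionOfPairs m (S.image p) ∧ IsUnionOfPairs m (S'.image p)).card
        = G * ((2*a).factorial * ((2*b).factorial * ((2*c).factorial * (2*d).factorial)))
      ∧ m.factorial = G * (a.factorial * (b.factorial * (c.factorial * d.factorial))) := by
  -- membership in image of a permutation
  have memIm : ∀ (p : Equiv.Perm (Fin (2 * m))) (T : Finset (Fin (2 * m))) z,
      z ∈ T.image ⇑p ↔ p.symm z ∈ T := by
    intro p T z
    constructor
    · intro h
      rcases Finset.mem_image.mp h with ⟨x, hx, rfl⟩
      simpa using hx
    · intro h; exact Finset.mem_image.mpr ⟨p.symm z, h, by simp⟩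
  -- reformulate the condition
  have claim1 : ∀ p : Equiv.Perm (Fin (2 * m)),
      (IsUnionOfPairs m (S.image p) ∧ IsUnionOfPairs m (S'.image p)) ↔
      (∃ g : Fin m → Bool × Bool, ∀ z, colFn S S' (p.symm z) = g (pairIdx m z)) := by
    intro p
    rw [isUnionOfPairs_iff, isUnionOfPairs_iff]
    constructor
    · rintro ⟨h1, h2⟩
      refine ⟨fun i => colFn S S' (p.symm (pairEmb m i)), fun z => ?_⟩
      have hz : pairIdx m z = pairIdx m (pairEmb m (pairIdx m z)) := (pairIdx_pairEmb _).symm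
      have hS := h1 z _ hz
      have hS' := h2 z _ hz
      rw [memIm, memIm] at hS
      rw [memIm, memIm] at hS'
      simp only [colFn, Prod.mk.injEq]
      exact ⟨decide_eq_decide.mpr hS, decide_eq_decide.mpr hS'⟩
    · rintro ⟨g, hg⟩
      constructor <;>
      · intro z w hzw
        rw [memIm, memIm]
        have hcompat : colFn S S' (p.symm z) = colFn S S' (p.symm w) := by
          rw [hg z, hg w, hzw]
        simp only [colFn, Prod.mk.injEq] at hcompat
        first
        | exact decide_eq_decide.mp hcompat.1
        | exact decide_eq_decide.mp hcompat.2
  -- replace p by its inverse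
  have hcard1 : (Finset.univ.filter fun p : Equiv.Perm (Fin (2 * m)) =>
        IsUnionOfPairs m (S.image p) ∧ IsUnionOfPairs m (S'.image p)).card
      = (Finset.univ.filter fun q : Equiv.Perm (Fin (2 * m)) =>
        ∃ g : Fin m → Bool × Bool, ∀ z, colFn S S' (q z) = g (pairIdx m z)).card := by
    apply Finset.card_bij' (i := fun p _ => p.symm) (j := fun q _ => q.symm)
    case left_inv => intro p _; simp
    case right_inv => intro q _; simp
    case hi =>
      intro p hp
      simp only [Finset.mem_filter, Finset.mem_univ, true_and] at hp ⊢
      exact (claim1 p).mp hp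
    case hj =>
      intro q hq
      simp only [Finset.mem_filter, Finset.mem_univ, true_and] at hq ⊢
      apply (claim1 q.symm).mpr
      simpa using hq
  -- split according to the coloring of pairs
  have hsplit : (Finset.univ.filter fun q : Equiv.Perm (Fin (2 * m)) =>
        ∃ g : Fin m → Bool × Bool, ∀ z, colFn S S' (q z) = g (pairIdx m z))
      = (Finset.univ : Finset (Fin m → Bool × Bool)).biUnion
          (fun g => Finset.univ.filter fun q : Equiv.Perm (Fin (2 * m)) =>
            ∀ z, colFn S S' (q z) = g (pairIdx m z)) := by
    ext q
    simp only [Finset.mem_filter, Finset.mem_univ, true_and, Finset.mem_biUnion]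
  have hdisj : ∀ g ∈ (Finset.univ : Finset (Fin m → Bool × Bool)), ∀ g' ∈ Finset.univ, g ≠ g' →
      Disjoint (Finset.univ.filter fun q : Equiv.Perm (Fin (2 * m)) =>
            ∀ z, colFn S S' (q z) = g (pairIdx m z))
        (Finset.univ.filter fun q : Equiv.Perm (Fin (2 * m)) =>
            ∀ z, colFn S S' (q z) = g' (pairIdx m z)) := by
    intro g _ g' _ hgg'
    simp only [Finset.disjoint_left, Finset.mem_filter, Finset.mem_univ, true_and]
    intro q hq hq'
    apply hgg'
    funext i
    have h1 := hq (pairEmb m i)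
    have h2 := hq' (pairEmb m i)
    rw [pairIdx_pairEmb] at h1 h2
    rw [← h1, ← h2]
  -- fiber sizes of the coloring of Fin (2m)
  have hszc : ∀ k, ((Finset.univ : Finset (Fin (2 * m))).filter
      fun x => colFn S S' x = k).card = 2 * szFn a b c d k := by
    rintro ⟨k1, k2⟩
    have e1 : (Finset.univ.filter fun x => colFn S S' x = ((true : Bool), (true : Bool)))
        = S ∩ S' := by
      ext x; simp [colFn, Prod.mk.injEq, Finset.mem_inter]
    have e2 : (Finset.univ.filter fun x => colFn S S' x = ((true : Bool), (false : Bool)))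
        = S \ S' := by
      ext x; simp [colFn, Prod.mk.injEq, Finset.mem_sdiff]
    have e3 : (Finset.univ.filter fun x => colFn S S' x = ((false : Bool), (true : Bool)))
        = S' \ S := by
      ext x; simp [colFn, Prod.mk.injEq, Finset.mem_sdiff, and_comm]
    have e4 : (Finset.univ.filter fun x => colFn S S' x = ((false : Bool), (false : Bool)))
        = (S ∪ S')ᶜ := by
      ext x; simp [colFn, Prod.mk.injEq, Finset.mem_compl, Finset.mem_union, not_or]
    cases k1 <;> cases k2
    · rw [e4, hd]; simp [szFn]
    · rw [e3, hc]; simp [szFn]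
    · rw [e2, hb]; simp [szFn]
    · rw [e1, hab]; simp [szFn]
  -- count for each coloring g
  have hper : ∀ g : Fin m → Bool × Bool,
      (Finset.univ.filter fun q : Equiv.Perm (Fin (2 * m)) =>
        ∀ z, colFn S S' (q z) = g (pairIdx m z)).card
      = if (∀ k, ((Finset.univ : Finset (Fin m)).filter fun i => g i = k).card = szFn a b c d k)
          then ∏ k : Bool × Bool, Nat.factorial (2 * szFn a b c d k) else 0 := by
    intro g
    by_cases hg : ∀ k, ((Finset.univ : Finset (Fin m)).filter fun i => g i = k).card
        = szFn a b c d k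
    · rw [if_pos hg]
      have key := card_perm_compat_of_counts (colFn S S') (fun z => g (pairIdx m z))
        (fun k => by rw [card_filter_pairIdx g k, hg k, hszc k])
      refine Eq.trans (b := ∏ k : Bool × Bool,
          Nat.factorial ((Finset.univ.filter fun x => colFn S S' x = k).card)) ?_
        (Finset.prod_congr rfl fun k _ => by rw [hszc k])
      convert key using 2
      exact filter_ext _ _ _ _ _ fun _ => Iff.rfl
    · rw [if_neg hg]
      have hc2 : ¬ ∀ k, ((Finset.univ : Finset (Fin (2 * m))).filter
          fun x => (fun z => g (pairIdx m z)) x = k).card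
          = ((Finset.univ : Finset (Fin (2 * m))).filter fun x => colFn S S' x = k).card := by
        intro hcontra
        apply hg
        intro k
        have h1 := hcontra k
        dsimp only at h1
        rw [card_filter_pairIdx g k, hszc k] at h1
        clear hdisj hsplit hcard1 claim1 memIm; omega
      have key := card_perm_compat_of_not_counts (colFn S S') (fun z => g (pairIdx m z)) hc2
      convert key using 2
      exact filter_ext _ _ _ _ _ fun _ => Iff.rfl
  -- total count
  have hNsum : (Finset.univ.filter fun p : Equiv.Perm (Fin (2 * m)) =>
        IsUnionOfPairs m (S.image p) ∧ IsUnionOfPairs m (S'.image p)).card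
      = ((Finset.univ : Finset (Fin m → Bool × Bool)).filter fun g =>
          ∀ k, ((Finset.univ : Finset (Fin m)).filter fun i => g i = k).card
            = szFn a b c d k).card * ∏ k : Bool × Bool, Nat.factorial (2 * szFn a b c d k) := by
    rw [hcard1, hsplit, Finset.card_biUnion hdisj]
    refine (Finset.sum_congr rfl fun g _ => hper g).trans ?_
    rw [← Finset.sum_filter, Finset.sum_const, smul_eq_mul]
  -- a + b + c + d = m
  have habcd : a + b + c + d = m := by
    have htot := Finset.card_eq_sum_card_fiberwise
      (s := (Finset.univ : Finset (Fin (2 * m)))) (t := (Finset.univ : Finset (Bool × Bool)))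
      (f := colFn S S') (fun x _ => Finset.mem_univ _)
    rw [Finset.card_univ, Fintype.card_fin] at htot
    have h2 := htot.trans (Finset.sum_congr rfl fun k _ => hszc k)
    rw [Fintype.sum_prod_type] at h2
    simp only [Fintype.sum_bool, szFn] at h2
    norm_num at h2
    clear hper hNsum hdisj hsplit hcard1 claim1 memIm; omega
  have hg0 := fun k => refColoring_counts (m := m) (a := a) (b := b) (c := c) (d := d) habcd k
  -- m! in terms of the number of valid colorings
  have hmfact : m.factorial = ((Finset.univ : Finset (Fin m → Bool × Bool)).filter fun g =>
      ∀ k, ((Finset.univ : Finset (Fin m)).filter fun i => g i = k).card = szFn a b c d k).card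
      * ∏ k : Bool × Bool, Nat.factorial (szFn a b c d k) := by
    have htot := Finset.card_eq_sum_card_fiberwise
      (s := (Finset.univ : Finset (Equiv.Perm (Fin m))))
      (t := (Finset.univ : Finset (Fin m → Bool × Bool)))
      (f := fun q => fun i => refColoring a b c m (q i)) (fun q _ => Finset.mem_univ _)
    rw [Finset.card_univ, Fintype.card_perm, Fintype.card_fin] at htot
    have hfib : ∀ h : Fin m → Bool × Bool,
        ((Finset.univ : Finset (Equiv.Perm (Fin m))).filter fun q =>
          (fun i => refColoring a b c m (q i)) = h).card
        = if (∀ k, ((Finset.univ : Finset (Fin m)).filter fun i => h i = k).card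
            = szFn a b c d k)
            then ∏ k : Bool × Bool, Nat.factorial (szFn a b c d k) else 0 := by
      intro h
      have e : ((Finset.univ : Finset (Equiv.Perm (Fin m))).filter fun q =>
          (fun i => refColoring a b c m (q i)) = h)
          = ((Finset.univ : Finset (Equiv.Perm (Fin m))).filter fun q =>
            ∀ i, refColoring a b c m (q i) = h i) :=
        Finset.filter_congr fun q _ => by rw [funext_iff]
      rw [e]
      by_cases hh : ∀ k, ((Finset.univ : Finset (Fin m)).filter fun i => h i = k).card
          = szFn a b c d k
      · rw [if_pos hh]
        have key := card_perm_compat_of_counts (refColoring a b c m) h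
          (fun k => by rw [hh k, hg0 k])
        refine Eq.trans (b := ∏ k : Bool × Bool,
            Nat.factorial ((Finset.univ.filter fun i => refColoring a b c m i = k).card)) ?_
          (Finset.prod_congr rfl fun k _ => by rw [hg0 k])
        convert key using 2
        exact filter_ext _ _ _ _ _ fun _ => Iff.rfl
      · rw [if_neg hh]
        have hc2 : ¬ ∀ k, ((Finset.univ : Finset (Fin m)).filter fun i => h i = k).card
            = ((Finset.univ : Finset (Fin m)).filter fun i => refColoring a b c m i = k).card := by
          intro hcontra
          exact hh fun k => by rw [hcontra k, hg0 k]
        have key := card_perm_compat_of_not_counts (refColoring a b c m) h hc2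
        convert key using 2
        exact filter_ext _ _ _ _ _ fun _ => Iff.rfl
    have h2 := htot.trans (Finset.sum_congr rfl fun h _ => hfib h)
    rw [← Finset.sum_filter, Finset.sum_const, smul_eq_mul] at h2
    exact h2
  refine ⟨((Finset.univ : Finset (Fin m → Bool × Bool)).filter fun g =>
      ∀ k, ((Finset.univ : Finset (Fin m)).filter fun i => g i = k).card
        = szFn a b c d k).card, ?_, ?_⟩
  · rw [hNsum]
    congr 1
    rw [Fintype.prod_prod_type]
    simp only [Fintype.prod_bool]
    norm_num [szFn]
    ring
  · rw [hmfact]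
    congr 1
    rw [Fintype.prod_prod_type]
    simp only [Fintype.prod_bool]
    norm_num [szFn]
    ring

open Classical Nat in
theorem stmt_5 (m a b c d : ℕ) (S S' : Finset (Fin (2 * m)))
    (hab : (S ∩ S').card = 2 * a) (hb : (S \ S').card = 2 * b) (hc : (S' \ S).card = 2 * c)
    (hd : ((S ∪ S')ᶜ).card = 2 * d) :
    ((Finset.univ.filter fun p : Equiv.Perm (Fin (2 * m)) =>
        IsUnionOfPairs m (S.image p) ∧ IsUnionOfPairs m (S'.image p)).card : ℝ) /
      ((Finset.univ : Finset (Equiv.Perm (Fin (2 * m)))).card : ℝ) =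
      ((m.factorial : ℝ) / ((a.factorial : ℝ) * (b.factorial : ℝ) * (c.factorial : ℝ) *
          (d.factorial : ℝ))) /
        (((2 * m).factorial : ℝ) / (((2 * a).factorial : ℝ) * ((2 * b).factorial : ℝ) *
          ((2 * c).factorial : ℝ) * ((2 * d).factorial : ℝ))) := by
  obtain ⟨G, hN, hm⟩ := main_count m a b c d S S' hab hb hc hd
  have hcardPerm : ((Finset.univ : Finset (Equiv.Perm (Fin (2 * m)))).card) = (2 * m)! := by
    rw [Finset.card_univ, Fintype.card_perm, Fintype.card_fin]
  rw [hcardPerm, hN, hm]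
  have f0 : ∀ n : ℕ, ((n)! : ℝ) ≠ 0 := fun n => Nat.cast_ne_zero.mpr (Nat.factorial_ne_zero n)
  have h2m := f0 (2 * m)
  have h2a := f0 (2 * a)
  have h2b := f0 (2 * b)
  have h2c := f0 (2 * c)
  have h2d := f0 (2 * d)
  have ha := f0 a
  have hbb := f0 b
  have hcc := f0 c
  have hdd := f0 d
  push_cast
  field_simp
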